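/- arXiv:2212.07002 — 3 statements merged into one kernel-verified Lean document; each statement's English description precedes it below -/
import Mathlib

section
/- Let α_1 ≥ α_2 ≥ … ≥ α_n be positive integers with n > 2, let S = Σ_{i=1}^n α_i with S > 2, let β be an integer with 0 < β < S, and let k < n be a positive integer. Consider the EAS instance with T = n + k + 4 time slots and n + 1 jobs, where for i ∈ {1,…,n}, job i has r_i = 2, d_i = k + 2 + i, and e_i = S²n² + α_i·(Sn), and job n+1 has r_{n+1} = 2, d_{n+1} = n + k + 4, and e_{n+1} = S³n³; and where h_1 = k·(S²n²) + β·(Sn); h_t = 0 for t ∈ {2,…,k+1}; h_{k+2} = (n−k)·(S²n²) + (S−β)·(Sn); h_t = S + α_{t−k−2} for t ∈ {k+3,…,n+k+2}; h_{n+k+3} = S³n³ − S·k − β; and h_{n+k+4} = 0. Then there exists a feasible schedule scheduling all n + 1 jobs if and only if there exists a set I ⊆ {1,…,n} with |I| = k and Σ_{i ∈ I} α_i = β. -/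
/-- The energy available immediately before slot `t`:
the total energy harvestable at slots `1,…,t-1`, minus, for each job `i ∈ J`
scheduled at a slot `σ i < t`, its energy requirement `e i` plus the harvestable
energy `h (σ i)` lost at its execution slot. -/
def energyBefore (e h : ℕ → ℤ) (J : Finset ℕ) (σ : ℕ → ℕ) (t : ℕ) : ℤ :=
  (∑ τ ∈ Finset.Icc 1 (t - 1), h τ) -
    ∑ i ∈ J.filter (fun i => σ i < t), (e i + h (σ i))

/-- A schedule `(J, σ)` is feasible for an EAS instance with `n` jobs, `T` slots,
release times `r`, due dates `d`, energy requirements `e` and harvest profile `h`. -/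
def IsFeasible (n T : ℕ) (r d : ℕ → ℕ) (e h : ℕ → ℤ)
    (J : Finset ℕ) (σ : ℕ → ℕ) : Prop :=
  J ⊆ Finset.Icc 1 n ∧ Set.InjOn σ ↑J ∧
    ∀ i ∈ J, 1 ≤ σ i ∧ σ i ≤ T ∧ r i ≤ σ i ∧ σ i ≤ d i ∧
      e i ≤ energyBefore e h J σ (σ i)


set_option maxHeartbeats 4000000 in
/-- Correctness of the reduction from k-SUM to EAS with
identical release times and arbitrary due dates: the constructed instance with
`n + 1` jobs and `T = n + k + 4` slots admits a feasible schedule of all `n + 1`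
jobs iff some `k` of the `α i` sum to `β`. -/
theorem ksum_reduction_arbitrary_due (n k : ℕ) (α : ℕ → ℤ) (S β : ℤ)
    (hn : 2 < n)
    (hα_pos : ∀ i ∈ Finset.Icc 1 n, 0 < α i)
    (hα_sorted : ∀ i j, 1 ≤ i → i ≤ j → j ≤ n → α j ≤ α i)
    (hS : S = ∑ i ∈ Finset.Icc 1 n, α i) (hS2 : 2 < S)
    (hβ : 0 < β) (hβS : β < S)
    (hk : 0 < k) (hkn : k < n)
    (r : ℕ → ℕ) (hr : ∀ i, r i = 2)
    (d : ℕ → ℕ) (hd : ∀ i, 1 ≤ i → i ≤ n → d i = k + 2 + i)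
    (hd' : d (n + 1) = n + k + 4)
    (e : ℕ → ℤ) (he : ∀ i, 1 ≤ i → i ≤ n → e i = S ^ 2 * n ^ 2 + α i * (S * n))
    (he' : e (n + 1) = S ^ 3 * n ^ 3)
    (h : ℕ → ℤ)
    (hh1 : h 1 = k * (S ^ 2 * n ^ 2) + β * (S * n))
    (hh2 : ∀ t, 2 ≤ t → t ≤ k + 1 → h t = 0)
    (hh3 : h (k + 2) = (n - k) * (S ^ 2 * n ^ 2) + (S - β) * (S * n))
    (hh4 : ∀ t, k + 3 ≤ t → t ≤ n + k + 2 → h t = S + α (t - k - 2))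
    (hh5 : h (n + k + 3) = S ^ 3 * n ^ 3 - S * k - β)
    (hh6 : h (n + k + 4) = 0) :
    (∃ σ : ℕ → ℕ,
      IsFeasible (n + 1) (n + k + 4) r d e h (Finset.Icc 1 (n + 1)) σ) ↔
    ∃ I : Finset ℕ, I ⊆ Finset.Icc 1 n ∧ I.card = k ∧ ∑ i ∈ I, α i = β := by
  have hn3 : (3:ℤ) ≤ (n:ℤ) := by exact_mod_cast hn
  have hS3 : (3:ℤ) ≤ S := by linarith
  have hk1 : (1:ℤ) ≤ (k:ℤ) := by exact_mod_cast hk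
  have hknz : (k:ℤ) + 1 ≤ (n:ℤ) := by exact_mod_cast hkn
  have hα1 : ∀ i ∈ Finset.Icc 1 n, 1 ≤ α i := fun i hi => hα_pos i hi
  have hαsum_nonneg : ∀ I : Finset ℕ, I ⊆ Finset.Icc 1 n → 0 ≤ ∑ i ∈ I, α i := by
    intro I hI
    exact Finset.sum_nonneg fun i hi => le_of_lt (hα_pos i (hI hi))
  have hαsum_le : ∀ I : Finset ℕ, I ⊆ Finset.Icc 1 n → ∑ i ∈ I, α i ≤ S := by
    intro I hI
    rw [hS]
    exact Finset.sum_le_sum_of_subset_of_nonneg hI fun i hi _ => le_of_lt (hα_pos i hi)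
  have hαle : ∀ i ∈ Finset.Icc 1 n, α i ≤ S := by
    intro i hi
    rw [hS]
    exact Finset.single_le_sum (fun j hj => le_of_lt (hα_pos j hj)) hi
  have sum_e : ∀ I : Finset ℕ, I ⊆ Finset.Icc 1 n →
      ∑ i ∈ I, e i = (I.card : ℤ) * (S ^ 2 * n ^ 2) + (∑ i ∈ I, α i) * (S * n) := by
    intro I hI
    rw [Finset.sum_congr rfl (fun i hi => he i (Finset.mem_Icc.mp (hI hi)).1 (Finset.mem_Icc.mp (hI hi)).2),
      Finset.sum_add_distrib, Finset.sum_const, Finset.sum_mul, nsmul_eq_mul]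
  have sum_Sα : ∀ I : Finset ℕ,
      ∑ i ∈ I, (S + α i) = (I.card : ℤ) * S + ∑ i ∈ I, α i := by
    intro I
    rw [Finset.sum_add_distrib, Finset.sum_const, nsmul_eq_mul]
  have he_nonneg : ∀ i ∈ Finset.Icc 1 n, 0 ≤ e i := by
    intro i hi
    obtain ⟨h1, h2⟩ := Finset.mem_Icc.mp hi
    rw [he i h1 h2]
    have := hα_pos i hi
    positivity
  have he_nonneg' : ∀ i ∈ Finset.Icc 1 (n+1), 0 ≤ e i := by
    intro i hi
    obtain ⟨h1, h2⟩ := Finset.mem_Icc.mp hi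
    rcases Nat.lt_or_ge i (n+1) with hlt | hge
    · exact he_nonneg i (Finset.mem_Icc.mpr ⟨h1, by omega⟩)
    · have : i = n + 1 := by omega
      rw [this, he']
      positivity
  have hh_nonneg : ∀ t, 1 ≤ t → t ≤ n + k + 4 → 0 ≤ h t := by
    intro t ht1 ht2
    rcases eq_or_ne t 1 with rfl | h1
    · rw [hh1]; positivity
    rcases Nat.lt_or_ge t (k+2) with hlt | hge
    · rw [hh2 t (by omega) (by omega)]
    rcases eq_or_ne t (k+2) with rfl | h2
    · rw [hh3]
      have hnk : (0:ℤ) ≤ (n:ℤ) - (k:ℤ) := by linarith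
      have h1' : (0:ℤ) ≤ ((n:ℤ) - k) * (S ^ 2 * n ^ 2) := by positivity
      have h2' : (0:ℤ) ≤ (S - β) * (S * n) := by
        have : (0:ℤ) ≤ S - β := by linarith
        positivity
      linarith
    rcases Nat.lt_or_ge t (n+k+3) with hlt | hge2
    · rw [hh4 t (by omega) (by omega)]
      have hm : t - k - 2 ∈ Finset.Icc 1 n := Finset.mem_Icc.mpr ⟨by omega, by omega⟩
      have := hα_pos _ hm
      linarith
    rcases eq_or_ne t (n+k+3) with rfl | h3
    · rw [hh5]
      have hS0 : (0:ℤ) < S := by linarith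
      have hn0 : (0:ℤ) < (n:ℤ) := by linarith
      have hkn' : (k:ℤ) ≤ n := by linarith
      have hSk : S * k ≤ S * n := mul_le_mul_of_nonneg_left hkn' hS0.le
      have hP0 : (0:ℤ) < S * n := mul_pos hS0 hn0
      have h9 : (9:ℤ) ≤ S * n := by nlinarith
      have hβn : β ≤ S * n := by nlinarith
      have hcube : 2 * (S * n) ≤ S ^ 3 * n ^ 3 := by
        nlinarith [mul_nonneg (mul_nonneg (sub_nonneg.mpr h9) hP0.le) hP0.le,
          mul_nonneg (sub_nonneg.mpr h9) hP0.le]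
      linarith
    · have : t = n + k + 4 := by omega
      rw [this, hh6]
  have L1 : ∀ t, t ≤ k → ∑ τ ∈ Finset.Icc 1 (t+1), h τ = h 1 := by
    intro t ht
    induction t with
    | zero => simp
    | succ m ih =>
        rw [Finset.sum_Icc_succ_top (by omega), ih (by omega),
          hh2 (m+1+1) (by omega) (by omega), add_zero]
  have L3 : ∀ m, m ≤ n → ∑ τ ∈ Finset.Icc 1 (k+2+m), h τ
      = h 1 + h (k+2) + ∑ i ∈ Finset.Icc 1 m, (S + α i) := by
    intro m hm
    induction m with
    | zero =>
        have : k + 2 + 0 = (k+1) + 1 := by omega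
        rw [this, Finset.sum_Icc_succ_top (by omega), L1 k le_rfl]
        simp
    | succ m ih =>
        have : k + 2 + (m + 1) = (k + 2 + m) + 1 := by omega
        rw [this, Finset.sum_Icc_succ_top (by omega), ih (by omega),
          Finset.sum_Icc_succ_top (show 1 ≤ m + 1 by omega),
          hh4 (k+2+m+1) (by omega) (by omega)]
        have : k + 2 + m + 1 - k - 2 = m + 1 := by omega
        rw [this]
        ring
  have L4 : ∑ τ ∈ Finset.Icc 1 (n+k+3), h τ
      = h 1 + h (k+2) + (∑ i ∈ Finset.Icc 1 n, (S + α i)) + h (n+k+3) := by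
    have h1 : n + k + 3 = (k + 2 + n) + 1 := by omega
    rw [h1, Finset.sum_Icc_succ_top (by omega), L3 n le_rfl]
  constructor
  · rintro ⟨σ, hJsub, hinj, hfeas⟩
    classical
    have hmemJ : ∀ i, 1 ≤ i → i ≤ n + 1 → i ∈ Finset.Icc 1 (n+1) :=
      fun i h1 h2 => Finset.mem_Icc.mpr ⟨h1, h2⟩
    have hσ1 : ∀ i ∈ Finset.Icc 1 (n+1), 1 ≤ σ i := fun i hi => (hfeas i hi).1
    have hσT : ∀ i ∈ Finset.Icc 1 (n+1), σ i ≤ n + k + 4 := fun i hi => (hfeas i hi).2.1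
    have hσ2 : ∀ i ∈ Finset.Icc 1 (n+1), 2 ≤ σ i := by
      intro i hi
      have := (hfeas i hi).2.2.1
      rwa [hr] at this
    have hσd : ∀ i, 1 ≤ i → i ≤ n → σ i ≤ k + 2 + i := by
      intro i h1 h2
      have := (hfeas i (hmemJ i h1 (by omega))).2.2.2.1
      rwa [hd i h1 h2] at this
    have hSigf : ∑ i ∈ Finset.Icc 1 n, (S + α i) = (n:ℤ) * S + S := by
      rw [sum_Sα, ← hS]
      have hcn : (Finset.Icc 1 n).card = n := by rw [Nat.card_Icc]; omega
      rw [hcn]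
    have hfulle : ∑ i ∈ Finset.Icc 1 n, e i
        = (n:ℤ) * (S ^ 2 * n ^ 2) + S * (S * n) := by
      rw [sum_e (Finset.Icc 1 n) (Finset.Subset.refl _), ← hS]
      have hcn : (Finset.Icc 1 n).card = n := by rw [Nat.card_Icc]; omega
      rw [hcn]
    -- Step B : the big job is scheduled at slot n+k+4
    have hn1mem : n + 1 ∈ Finset.Icc 1 (n+1) := hmemJ (n+1) (by omega) le_rfl
    obtain ⟨hb1, hb2, hb3, hb4, hb5⟩ := hfeas (n+1) hn1mem
    have hsub_nonneg : ∀ t : ℕ, 0 ≤ ∑ i ∈ (Finset.Icc 1 (n+1)).filter (fun i => σ i < t),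
        (e i + h (σ i)) := by
      intro t
      apply Finset.sum_nonneg
      intro j hj
      obtain ⟨hjm, _⟩ := Finset.mem_filter.mp hj
      exact add_nonneg (he_nonneg' j hjm) (hh_nonneg _ (hσ1 j hjm) (hσT j hjm))
    have hσn1 : σ (n+1) = n + k + 4 := by
      by_contra hne
      have ht4 : σ (n+1) ≤ n + k + 4 := by rw [hd'] at hb4; exact hb4
      have htlt : σ (n+1) - 1 ≤ n + k + 2 := by omega
      have hE := hb5
      rw [he'] at hE
      unfold energyBefore at hE
      have hpre_le : ∑ τ ∈ Finset.Icc 1 (σ (n+1) - 1), h τ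
          ≤ ∑ τ ∈ Finset.Icc 1 (n+k+2), h τ := by
        apply Finset.sum_le_sum_of_subset_of_nonneg
          (Finset.Icc_subset_Icc_right htlt)
        intro τ hτ _
        obtain ⟨hτ1, hτ2⟩ := Finset.mem_Icc.mp hτ
        exact hh_nonneg τ hτ1 (by omega)
      have hfull : ∑ τ ∈ Finset.Icc 1 (n+k+2), h τ
          = h 1 + h (k+2) + ((n:ℤ) * S + S) := by
        have hL := L3 n le_rfl
        rw [show k + 2 + n = n + k + 2 by omega] at hL
        rw [hL, hSigf]
      have hBig : S ^ 3 * (n:ℤ) ^ 3 ≤ h 1 + h (k+2) + ((n:ℤ) * S + S) := by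
        have := hsub_nonneg (σ (n+1))
        linarith
      rw [hh1, hh3] at hBig
      -- numeric contradiction
      have hBig2 : S ^ 3 * (n:ℤ) ^ 3 ≤ S ^ 2 * (n:ℤ) ^ 3 + S ^ 2 * (n:ℤ) + (n:ℤ) * S + S := by
        linarith only [hBig]
      have hN0 : (0:ℤ) < (n:ℤ) := by linarith only [hn3]
      have hS0 : (0:ℤ) < S := by linarith only [hS3]
      have p1 : (0:ℤ) ≤ ((n:ℤ) - 3) * (n:ℤ) * (n:ℤ) :=
        mul_nonneg (mul_nonneg (by linarith only [hn3]) hN0.le) hN0.le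
      have p2 : (0:ℤ) ≤ ((n:ℤ) - 1) * (n:ℤ) :=
        mul_nonneg (by linarith only [hn3]) hN0.le
      have g1 : 3 * (n:ℤ) ≤ (n:ℤ) ^ 3 := by nlinarith only [p1, p2]
      have f1 : 3 * (S ^ 2 * (n:ℤ)) ≤ S ^ 2 * (n:ℤ) ^ 3 := by
        have := mul_le_mul_of_nonneg_left g1 (sq_nonneg S)
        linarith only [this]
      have p3 : (0:ℤ) ≤ ((n:ℤ) - 3) * ((n:ℤ) + 3) :=
        mul_nonneg (by linarith only [hn3]) (by linarith only [hn3])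
      have p4 : (0:ℤ) ≤ (S - 3) * (n:ℤ) ^ 2 :=
        mul_nonneg (by linarith only [hS3]) (sq_nonneg _)
      have q : (3:ℤ) ≤ S * (n:ℤ) ^ 2 := by nlinarith only [p3, p4, hS3]
      have p5 : (0:ℤ) ≤ ((n:ℤ) * S) * (S * (n:ℤ) ^ 2 - 3) :=
        mul_nonneg (mul_nonneg hN0.le hS0.le) (by linarith only [q])
      have f2 : 3 * ((n:ℤ) * S) ≤ S ^ 2 * (n:ℤ) ^ 3 := by nlinarith only [p5]
      have p7 : (0:ℤ) ≤ ((n:ℤ) - 3) * ((n:ℤ) ^ 2 + 3 * (n:ℤ) + 9) :=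
        mul_nonneg (by linarith only [hn3]) (by positivity)
      have hN3cube : (27:ℤ) ≤ (n:ℤ) ^ 3 := by nlinarith only [p7]
      have p10 : (0:ℤ) ≤ (S - 3) * (n:ℤ) ^ 3 :=
        mul_nonneg (by linarith only [hS3]) (by positivity)
      have p9 : (3:ℤ) ≤ S * (n:ℤ) ^ 3 := by nlinarith only [p10, hN3cube]
      have p11 : (0:ℤ) ≤ S * (S * (n:ℤ) ^ 3 - 3) :=
        mul_nonneg hS0.le (by linarith only [p9])
      have f3 : 3 * S ≤ S ^ 2 * (n:ℤ) ^ 3 := by nlinarith only [p11]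
      have p12 : (0:ℤ) ≤ (S - 3) * (S ^ 2 * (n:ℤ) ^ 3) :=
        mul_nonneg (by linarith only [hS3]) (by positivity)
      have f4 : 3 * (S ^ 2 * (n:ℤ) ^ 3) ≤ S ^ 3 * (n:ℤ) ^ 3 := by nlinarith only [p12]
      have hposN : (0:ℤ) < S ^ 2 * (n:ℤ) ^ 3 := by positivity
      linarith only [hBig2, f1, f2, f3, f4, hposN]
    -- the early set I and complement C
    set I := (Finset.Icc 1 n).filter (fun i => σ i ≤ k + 1) with hIdef
    have hIsub : I ⊆ Finset.Icc 1 n := Finset.filter_subset _ _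
    set C := Finset.Icc 1 n \ I with hCdef
    have hCsub : C ⊆ Finset.Icc 1 n := Finset.sdiff_subset
    have hdisjIC : Disjoint I C := Finset.disjoint_sdiff
    have hunion : I ∪ C = Finset.Icc 1 n := Finset.union_sdiff_of_subset hIsub
    have hmemI : ∀ i ∈ I, (1 ≤ i ∧ i ≤ n) ∧ σ i ≤ k + 1 := by
      intro i hi
      obtain ⟨h1, h2⟩ := Finset.mem_filter.mp hi
      exact ⟨Finset.mem_Icc.mp h1, h2⟩
    have hmemC : ∀ i ∈ C, (1 ≤ i ∧ i ≤ n) ∧ k + 2 ≤ σ i := by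
      intro i hi
      obtain ⟨h1, h2⟩ := Finset.mem_sdiff.mp hi
      obtain ⟨h3, h4⟩ := Finset.mem_Icc.mp h1
      refine ⟨⟨h3, h4⟩, ?_⟩
      by_contra hcon
      exact h2 (Finset.mem_filter.mpr ⟨h1, by omega⟩)
    have hsub' : ∀ i ∈ Finset.Icc 1 n, i ∈ Finset.Icc 1 (n+1) := by
      intro i hi
      obtain ⟨h1, h2⟩ := Finset.mem_Icc.mp hi
      exact hmemJ i h1 (by omega)
    -- master inequality
    have hstar : ∑ j ∈ Finset.Icc 1 n, h (σ j) ≤ (n:ℤ) * S + S - S * k - β := by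
      have hE := hb5
      rw [he', hσn1] at hE
      unfold energyBefore at hE
      rw [show n + k + 4 - 1 = n + k + 3 by omega, L4] at hE
      have hfil : (Finset.Icc 1 (n+1)).filter (fun j => σ j < n+k+4) = Finset.Icc 1 n := by
        ext j
        simp only [Finset.mem_filter, Finset.mem_Icc]
        constructor
        · rintro ⟨⟨hj1, hj2⟩, hlt⟩
          refine ⟨hj1, ?_⟩
          rcases eq_or_ne j (n+1) with rfl | hj3
          · rw [hσn1] at hlt; omega
          · omega
        · rintro ⟨hj1, hj2⟩
          exact ⟨⟨hj1, by omega⟩, by have := hσd j hj1 hj2; omega⟩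
      rw [hfil, hSigf, Finset.sum_add_distrib, hfulle, hh5] at hE
      linarith
    have hsumI0 : ∑ j ∈ I, h (σ j) = 0 := by
      apply Finset.sum_eq_zero
      intro j hj
      obtain ⟨⟨h1, h2⟩, h3⟩ := hmemI j hj
      exact hh2 (σ j) (hσ2 j (hsub' j (hIsub hj))) h3
    have hsplitstar : ∑ j ∈ C, h (σ j) ≤ (n:ℤ) * S + S - S * k - β := by
      have := Finset.sum_union (f := fun j => h (σ j)) hdisjIC
      rw [hunion] at this
      rw [this, hsumI0] at hstar
      linarith
    have hhσnonneg : ∀ j ∈ Finset.Icc 1 n, 0 ≤ h (σ j) := by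
      intro j hj
      exact hh_nonneg _ (hσ1 j (hsub' j hj)) (hσT j (hsub' j hj))
    -- no job at slot k+2
    have hσCge : ∀ j ∈ C, k + 3 ≤ σ j := by
      intro j hj
      obtain ⟨⟨h1, h2⟩, h3⟩ := hmemC j hj
      rcases eq_or_ne (σ j) (k+2) with heq | hne'
      · exfalso
        have hsingle : h (σ j) ≤ ∑ j' ∈ C, h (σ j') :=
          Finset.single_le_sum (fun x hx => hhσnonneg x (hCsub hx)) hj
        rw [heq, hh3] at hsingle
        have hbound : ((n:ℤ) - k) * (S ^ 2 * (n:ℤ) ^ 2) + (S - β) * (S * n)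
            ≤ (n:ℤ) * S + S - S * k - β := le_trans hsingle hsplitstar
        have key1 : (0:ℤ) ≤ (S - β) * (S * n) := by
          apply mul_nonneg (by linarith only [hβS])
          positivity
        have key2 : (1:ℤ) ≤ (n:ℤ) - k := by linarith only [hknz]
        have key3 : S ^ 2 * (n:ℤ) ^ 2 ≤ ((n:ℤ) - k) * (S ^ 2 * (n:ℤ) ^ 2) := by
          have : (0:ℤ) ≤ ((n:ℤ) - k - 1) * (S ^ 2 * (n:ℤ) ^ 2) :=
            mul_nonneg (by linarith only [key2]) (by positivity)
          linarith only [this]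
        have r1 : (0:ℤ) ≤ (S - 3) * (S * (n:ℤ) ^ 2) :=
          mul_nonneg (by linarith only [hS3]) (by positivity)
        have r2 : (0:ℤ) ≤ 3 * S * (((n:ℤ) - 3) * (n:ℤ)) := by
          apply mul_nonneg (by linarith only [hS3])
          exact mul_nonneg (by linarith only [hn3]) (by linarith only [hn3])
        have r3 : (0:ℤ) ≤ ((n:ℤ) - 1) * S :=
          mul_nonneg (by linarith only [hn3]) (by linarith only [hS3])
        have r4 : (0:ℤ) < S * (n:ℤ) :=
          mul_pos (by linarith only [hS3]) (by linarith only [hn3])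
        have r5 : (0:ℤ) ≤ S * (k:ℤ) :=
          mul_nonneg (by linarith only [hS3]) (by linarith only [hk1])
        nlinarith only [hbound, key1, key3, r1, r2, r3, r4, r5, hβ]
      · omega
    have hhC : ∀ j ∈ C, h (σ j) = S + α (σ j - k - 2) := by
      intro j hj
      obtain ⟨⟨h1, h2⟩, _⟩ := hmemC j hj
      exact hh4 (σ j) (hσCge j hj) (by have := hσd j h1 h2; omega)
    have hcmem : ∀ j ∈ C, 1 ≤ σ j - k - 2 ∧ σ j - k - 2 ≤ j := by
      intro j hj
      obtain ⟨⟨h1, h2⟩, _⟩ := hmemC j hj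
      have := hσCge j hj
      have := hσd j h1 h2
      omega
    -- cardinality of I
    have hIcard_le : I.card ≤ k := by
      have hmaps : ∀ i ∈ I, σ i ∈ Finset.Icc 2 (k+1) := by
        intro i hi
        obtain ⟨⟨h1, h2⟩, h3⟩ := hmemI i hi
        exact Finset.mem_Icc.mpr ⟨hσ2 i (hsub' i (hIsub hi)), h3⟩
      have hinj' : Set.InjOn σ ↑I := hinj.mono (by
        intro x hx
        simp only [Finset.coe_Icc, Set.mem_Icc]
        have := hmemI x hx
        exact ⟨this.1.1, by omega⟩)
      have := Finset.card_le_card_of_injOn σ hmaps hinj'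
      rwa [Nat.card_Icc, show k + 1 + 1 - 2 = k by omega] at this
    have hCcard : C.card = n - I.card := by
      rw [hCdef, Finset.card_sdiff_of_subset hIsub, Nat.card_Icc]
      omega
    have hIcard : I.card = k := by
      by_contra hne'
      have hIlt : I.card ≤ k - 1 := by omega
      have hClb : n - k + 1 ≤ C.card := by omega
      have heach : ∀ j ∈ C, S + 1 ≤ h (σ j) := by
        intro j hj
        rw [hhC j hj]
        have hc := hcmem j hj
        have hj2 := (hmemC j hj).1.2
        have := hα1 (σ j - k - 2) (Finset.mem_Icc.mpr ⟨hc.1, by omega⟩)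
        linarith
      have hlb : (C.card : ℤ) * (S + 1) ≤ ∑ j ∈ C, h (σ j) := by
        have := Finset.card_nsmul_le_sum C (fun j => h (σ j)) (S+1) heach
        rwa [nsmul_eq_mul] at this
      have hcast : ((n:ℤ) - k + 1) ≤ (C.card : ℤ) := by omega
      have hS1 : (0:ℤ) < S + 1 := by linarith only [hS3]
      have hmm := mul_le_mul_of_nonneg_right hcast hS1.le
      linarith only [hmm, hlb, hsplitstar, hβ, hknz]
    -- lower bound : β ≤ ∑ I α
    have hCcast : (C.card : ℤ) = (n:ℤ) - k := by omega
    have hsumCα : ∑ i ∈ C, α i = S - ∑ i ∈ I, α i := by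
      have h2 := Finset.sum_sdiff (f := α) hIsub
      rw [← hCdef, ← hS] at h2
      linarith
    have hlower : β ≤ ∑ i ∈ I, α i := by
      have hpt : ∑ j ∈ C, (S + α j) ≤ ∑ j ∈ C, h (σ j) := by
        apply Finset.sum_le_sum
        intro j hj
        rw [hhC j hj]
        have hc := hcmem j hj
        have hj2 := (hmemC j hj).1
        have := hα_sorted (σ j - k - 2) j hc.1 hc.2 hj2.2
        linarith
      rw [sum_Sα, hCcast, hsumCα] at hpt
      have hfin := le_trans hpt hsplitstar
      linarith only [hfin]
    -- upper bound : ∑ I α ≤ β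
    have hIne : I.Nonempty := Finset.card_pos.mp (by omega)
    obtain ⟨im, him, hmax⟩ := Finset.exists_max_image I σ hIne
    have himJ : im ∈ Finset.Icc 1 (n+1) := hsub' im (hIsub him)
    obtain ⟨⟨him1, him2⟩, him3⟩ := hmemI im him
    have him4 : 2 ≤ σ im := hσ2 im himJ
    have hEm := (hfeas im himJ).2.2.2.2
    have hupper : ∑ i ∈ I, α i ≤ β := by
      unfold energyBefore at hEm
      have hpre : ∑ τ ∈ Finset.Icc 1 (σ im - 1), h τ = h 1 := by
        have := L1 (σ im - 2) (by omega)
        rwa [show σ im - 2 + 1 = σ im - 1 by omega] at this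
      have hfil : (Finset.Icc 1 (n+1)).filter (fun j => σ j < σ im) = I.erase im := by
        ext j
        simp only [Finset.mem_filter, Finset.mem_Icc, Finset.mem_erase]
        constructor
        · rintro ⟨⟨hj1, hj2⟩, hlt⟩
          rcases eq_or_ne j (n+1) with rfl | hj3
          · rw [hσn1] at hlt; omega
          · have hjI : j ∈ I := Finset.mem_filter.mpr
              ⟨Finset.mem_Icc.mpr ⟨hj1, by omega⟩, by omega⟩
            exact ⟨by rintro rfl; omega, hjI⟩
        · rintro ⟨hne', hjI⟩
          obtain ⟨⟨hj1, hj2⟩, hj3⟩ := hmemI j hjI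
          refine ⟨⟨hj1, by omega⟩, ?_⟩
          have hle := hmax j hjI
          have : σ j ≠ σ im := fun hcon =>
            hne' (hinj (hsub' j (hIsub hjI)) himJ hcon)
          omega
      rw [hpre, hfil] at hEm
      have hzero : ∑ j ∈ I.erase im, (e j + h (σ j)) = ∑ j ∈ I.erase im, e j := by
        apply Finset.sum_congr rfl
        intro j hj
        have hjI := Finset.mem_of_mem_erase hj
        obtain ⟨⟨hj1, hj2⟩, hj3⟩ := hmemI j hjI
        rw [hh2 (σ j) (hσ2 j (hsub' j (hIsub hjI))) hj3, add_zero]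
      rw [hzero] at hEm
      have htot : e im + ∑ j ∈ I.erase im, e j = ∑ j ∈ I, e j :=
        Finset.add_sum_erase I e him
      have hIe : ∑ j ∈ I, e j ≤ h 1 := by linarith
      rw [sum_e I hIsub, hIcard, hh1] at hIe
      have hM : (0:ℤ) < S * (n:ℤ) :=
        mul_pos (by linarith only [hS3]) (by linarith only [hn3])
      exact le_of_mul_le_mul_right (by linarith only [hIe]) hM
    exact ⟨I, hIsub, hIcard, le_antisymm hupper hlower⟩
  · rintro ⟨I, hIsub, hIcard, hIsum⟩
    classical
    have hmemI : ∀ i ∈ I, 1 ≤ i ∧ i ≤ n := fun i hi => Finset.mem_Icc.mp (hIsub hi)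
    set C := Finset.Icc 1 n \ I with hC
    have hCsub : C ⊆ Finset.Icc 1 n := Finset.sdiff_subset
    have hmemC : ∀ i ∈ C, (1 ≤ i ∧ i ≤ n) ∧ i ∉ I := by
      intro i hi
      have h2 := Finset.mem_sdiff.mp hi
      exact ⟨Finset.mem_Icc.mp h2.1, h2.2⟩
    have hdisjIC : Disjoint I C := Finset.disjoint_sdiff
    have hunion : I ∪ C = Finset.Icc 1 n := Finset.union_sdiff_of_subset hIsub
    -- the rank function
    set c : ℕ → ℕ := fun i => (I.filter (fun j => j ≤ i)).card with hcdef
    have hc_mono : ∀ i j : ℕ, i ≤ j → c i ≤ c j := by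
      intro i j hij
      apply Finset.card_le_card
      intro x hx
      simp only [Finset.mem_filter] at hx ⊢
      exact ⟨hx.1, le_trans hx.2 hij⟩
    have hc_strict : ∀ i j : ℕ, j ∈ I → i < j → c i < c j := by
      intro i j hj hij
      apply Finset.card_lt_card
      refine (Finset.ssubset_iff_of_subset ?_).mpr ⟨j, ?_, ?_⟩
      · intro x hx
        simp only [Finset.mem_filter] at hx ⊢
        exact ⟨hx.1, by omega⟩
      · simp only [Finset.mem_filter]
        exact ⟨hj, le_rfl⟩
      · simp only [Finset.mem_filter]
        push_neg
        intro _
        omega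
    have hc_bounds : ∀ i ∈ I, 1 ≤ c i ∧ c i ≤ k := by
      intro i hi
      constructor
      · apply Finset.card_pos.mpr
        exact ⟨i, Finset.mem_filter.mpr ⟨hi, le_rfl⟩⟩
      · rw [← hIcard]
        exact Finset.card_le_card (Finset.filter_subset _ _)
    set σ : ℕ → ℕ := fun i =>
      if i = n+1 then n+k+4 else if i ∈ I then 1 + c i else k+2+i with hσdef
    have hσn1 : σ (n+1) = n+k+4 := by simp [hσdef]
    have hσI : ∀ i ∈ I, σ i = 1 + c i := by
      intro i hi
      have h2 := (hmemI i hi).2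
      simp only [hσdef]
      rw [if_neg (by omega), if_pos hi]
    have hσC : ∀ i ∈ C, σ i = k+2+i := by
      intro i hi
      obtain ⟨⟨h1, h2⟩, h3⟩ := hmemC i hi
      simp only [hσdef]
      rw [if_neg (by omega), if_neg h3]
    have hσIb : ∀ i ∈ I, 2 ≤ σ i ∧ σ i ≤ k + 1 := by
      intro i hi
      rw [hσI i hi]
      have := hc_bounds i hi
      omega
    have hσCb : ∀ i ∈ C, k + 3 ≤ σ i ∧ σ i ≤ n + k + 2 := by
      intro i hi
      rw [hσC i hi]
      have := (hmemC i hi).1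
      omega
    -- zero harvest at slots of I-jobs
    have hhσI : ∀ i ∈ I, h (σ i) = 0 := by
      intro i hi
      have := hσIb i hi
      exact hh2 (σ i) this.1 this.2
    have hhσC : ∀ i ∈ C, h (σ i) = S + α i := by
      intro i hi
      have hb := (hmemC i hi).1
      rw [hσC i hi, hh4 (k+2+i) (by omega) (by omega)]
      congr 1
      congr 1
      omega
    -- key sums
    have hCcard : C.card = n - k := by
      rw [hC, Finset.card_sdiff_of_subset hIsub, hIcard, Nat.card_Icc]
      omega
    have hsumCα : ∑ i ∈ C, α i = S - β := by
      have h2 := Finset.sum_sdiff (f := α) hIsub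
      rw [← hC, hIsum, ← hS] at h2
      linarith
    have hsumIe : ∑ i ∈ I, e i = h 1 := by
      rw [sum_e I hIsub, hIcard, hIsum, hh1]
    have hsumCe : ∑ i ∈ C, e i = h (k+2) := by
      rw [sum_e C hCsub, hCcard, hsumCα, hh3]
      have : ((n - k : ℕ) : ℤ) = (n : ℤ) - (k : ℤ) := by
        have : k ≤ n := le_of_lt hkn
        push_cast [this]
        ring
      rw [this]
    have hsumISα : ∑ i ∈ I, (S + α i) = (k:ℤ) * S + β := by
      rw [sum_Sα I, hIcard, hIsum]
    have hSαnonnegI : ∀ j ∈ I, 0 ≤ S + α j := by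
      intro j hj
      have := hα_pos j (hIsub hj)
      linarith
    -- injectivity
    have hinj : Set.InjOn σ ↑(Finset.Icc 1 (n+1)) := by
      intro i hi j hj hij
      simp only [Finset.coe_Icc, Set.mem_Icc] at hi hj
      rcases eq_or_ne i (n+1) with rfl | hi1
      · rcases eq_or_ne j (n+1) with rfl | hj1
        · rfl
        · exfalso
          rw [hσn1] at hij
          by_cases hjI : j ∈ I
          · have := hσIb j hjI; omega
          · have hjC : j ∈ C := Finset.mem_sdiff.mpr ⟨Finset.mem_Icc.mpr ⟨hj.1, by omega⟩, hjI⟩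
            have := hσCb j hjC; omega
      · rcases eq_or_ne j (n+1) with rfl | hj1
        · exfalso
          rw [hσn1] at hij
          by_cases hiI : i ∈ I
          · have := hσIb i hiI; omega
          · have hiC : i ∈ C := Finset.mem_sdiff.mpr ⟨Finset.mem_Icc.mpr ⟨hi.1, by omega⟩, hiI⟩
            have := hσCb i hiC; omega
        · by_cases hiI : i ∈ I
          · by_cases hjI : j ∈ I
            · rcases lt_trichotomy i j with hlt | heq | hgt
              · exfalso
                have := hc_strict i j hjI hlt
                rw [hσI i hiI, hσI j hjI] at hij
                omega
              · exact heq
              · exfalso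
                have := hc_strict j i hiI hgt
                rw [hσI i hiI, hσI j hjI] at hij
                omega
            · exfalso
              have hjC : j ∈ C := Finset.mem_sdiff.mpr ⟨Finset.mem_Icc.mpr ⟨hj.1, by omega⟩, hjI⟩
              have := hσIb i hiI
              have := hσCb j hjC
              omega
          · by_cases hjI : j ∈ I
            · exfalso
              have hiC : i ∈ C := Finset.mem_sdiff.mpr ⟨Finset.mem_Icc.mpr ⟨hi.1, by omega⟩, hiI⟩
              have := hσCb i hiC
              have := hσIb j hjI
              omega
            · have hiC : i ∈ C := Finset.mem_sdiff.mpr ⟨Finset.mem_Icc.mpr ⟨hi.1, by omega⟩, hiI⟩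
              have hjC : j ∈ C := Finset.mem_sdiff.mpr ⟨Finset.mem_Icc.mpr ⟨hj.1, by omega⟩, hjI⟩
              rw [hσC i hiC, hσC j hjC] at hij
              omega
    refine ⟨σ, Finset.Subset.refl _, hinj, ?_⟩
    intro i hi
    obtain ⟨hi1, hi2⟩ := Finset.mem_Icc.mp hi
    rcases eq_or_ne i (n+1) with rfl | hin1
    · -- the big job
      rw [hσn1, hr, hd', he']
      refine ⟨by omega, by omega, by omega, by omega, ?_⟩
      unfold energyBefore
      have ht1 : n + k + 4 - 1 = n + k + 3 := by omega
      rw [ht1, L4]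
      have hfil : (Finset.Icc 1 (n+1)).filter (fun j => σ j < n+k+4) = Finset.Icc 1 n := by
        ext j
        simp only [Finset.mem_filter, Finset.mem_Icc]
        constructor
        · rintro ⟨⟨hj1, hj2⟩, hlt⟩
          refine ⟨hj1, ?_⟩
          rcases eq_or_ne j (n+1) with rfl | hj3
          · rw [hσn1] at hlt; omega
          · omega
        · rintro ⟨hj1, hj2⟩
          refine ⟨⟨hj1, by omega⟩, ?_⟩
          by_cases hjI : j ∈ I
          · have := hσIb j hjI; omega
          · have hjC : j ∈ C := Finset.mem_sdiff.mpr ⟨Finset.mem_Icc.mpr ⟨hj1, hj2⟩, hjI⟩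
            have := hσCb j hjC; omega
      rw [hfil, ← hunion, Finset.sum_union hdisjIC, Finset.sum_union hdisjIC]
      have e1 : ∑ j ∈ I, (e j + h (σ j)) = ∑ j ∈ I, e j :=
        Finset.sum_congr rfl fun j hj => by rw [hhσI j hj, add_zero]
      have e2 : ∑ j ∈ C, (e j + h (σ j)) = ∑ j ∈ C, e j + ∑ j ∈ C, (S + α j) := by
        rw [← Finset.sum_add_distrib]
        exact Finset.sum_congr rfl fun j hj => by rw [hhσC j hj]
      rw [e1, e2, hsumISα, hh5]
      linarith
    · -- i is a normal job
      have hi2' : i ≤ n := by omega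
      rw [hr, hd i hi1 hi2']
      by_cases hiI : i ∈ I
      · -- jobs in I
        have hb := hσIb i hiI
        refine ⟨by omega, by omega, by omega, by omega, ?_⟩
        unfold energyBefore
        have hcb := hc_bounds i hiI
        have hpre : ∑ τ ∈ Finset.Icc 1 (σ i - 1), h τ = h 1 := by
          have := L1 (c i - 1) (by omega)
          have heq : c i - 1 + 1 = σ i - 1 := by rw [hσI i hiI]; omega
          rwa [heq] at this
        have hfil : (Finset.Icc 1 (n+1)).filter (fun j => σ j < σ i)
            = I.filter (fun j => j < i) := by
          ext j
          simp only [Finset.mem_filter, Finset.mem_Icc]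
          constructor
          · rintro ⟨⟨hj1, hj2⟩, hlt⟩
            rcases eq_or_ne j (n+1) with rfl | hj3
            · rw [hσn1] at hlt; omega
            · by_cases hjI : j ∈ I
              · refine ⟨hjI, ?_⟩
                by_contra hcon
                push_neg at hcon
                rcases eq_or_ne i j with rfl | hneq
                · omega
                · have : i < j := by omega
                  have := hc_strict i j hjI this
                  rw [hσI i hiI, hσI j hjI] at hlt
                  omega
              · have hjC : j ∈ C := Finset.mem_sdiff.mpr ⟨Finset.mem_Icc.mpr ⟨hj1, by omega⟩, hjI⟩
                have := hσCb j hjC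
                omega
          · rintro ⟨hjI, hlt⟩
            have hjm := hmemI j hjI
            refine ⟨⟨hjm.1, by omega⟩, ?_⟩
            have := hc_strict j i hiI hlt
            rw [hσI i hiI, hσI j hjI]
            omega
        rw [hpre, hfil]
        have e1 : ∑ j ∈ I.filter (fun j => j < i), (e j + h (σ j))
            = ∑ j ∈ I.filter (fun j => j < i), e j :=
          Finset.sum_congr rfl fun j hj => by
            rw [hhσI j (Finset.mem_filter.mp hj).1, add_zero]
        rw [e1, ← hsumIe]
        have hins : I.filter (fun j => j ≤ i) = insert i (I.filter (fun j => j < i)) := by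
          ext x
          simp only [Finset.mem_filter, Finset.mem_insert]
          constructor
          · rintro ⟨hx1, hx2⟩
            rcases eq_or_ne x i with rfl | hne
            · exact Or.inl rfl
            · exact Or.inr ⟨hx1, by omega⟩
          · rintro (rfl | ⟨hx1, hx2⟩)
            · exact ⟨hiI, le_rfl⟩
            · exact ⟨hx1, by omega⟩
        have hle : ∑ j ∈ I.filter (fun j => j ≤ i), e j ≤ ∑ j ∈ I, e j :=
          Finset.sum_le_sum_of_subset_of_nonneg (Finset.filter_subset _ _)
            (fun j hj _ => he_nonneg j (hIsub hj))
        rw [hins, Finset.sum_insert (by simp)] at hle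
        linarith
      · -- jobs in C
        have hiC : i ∈ C := Finset.mem_sdiff.mpr ⟨Finset.mem_Icc.mpr ⟨hi1, hi2'⟩, hiI⟩
        have hb := hσCb i hiC
        have hσi : σ i = k + 2 + i := hσC i hiC
        refine ⟨by omega, by omega, by omega, by omega, ?_⟩
        unfold energyBefore
        have hpre : ∑ τ ∈ Finset.Icc 1 (σ i - 1), h τ
            = h 1 + h (k+2) + ∑ j ∈ Finset.Icc 1 (i-1), (S + α j) := by
          have := L3 (i-1) (by omega)
          have heq : k + 2 + (i - 1) = σ i - 1 := by rw [hσi]; omega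
          rwa [heq] at this
        have hfil : (Finset.Icc 1 (n+1)).filter (fun j => σ j < σ i)
            = I ∪ C.filter (fun j => j < i) := by
          ext j
          simp only [Finset.mem_filter, Finset.mem_Icc, Finset.mem_union]
          constructor
          · rintro ⟨⟨hj1, hj2⟩, hlt⟩
            rcases eq_or_ne j (n+1) with rfl | hj3
            · rw [hσn1, hσi] at hlt; omega
            · by_cases hjI : j ∈ I
              · exact Or.inl hjI
              · have hjC : j ∈ C := Finset.mem_sdiff.mpr ⟨Finset.mem_Icc.mpr ⟨hj1, by omega⟩, hjI⟩
                refine Or.inr ⟨hjC, ?_⟩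
                rw [hσC j hjC, hσi] at hlt
                omega
          · rintro (hjI | ⟨hjC, hlt⟩)
            · have hjm := hmemI j hjI
              have := hσIb j hjI
              exact ⟨⟨hjm.1, by omega⟩, by omega⟩
            · have hjm := (hmemC j hjC).1
              refine ⟨⟨hjm.1, by omega⟩, ?_⟩
              rw [hσC j hjC, hσi]
              omega
        have hdisj2 : Disjoint I (C.filter (fun j => j < i)) :=
          hdisjIC.mono_right (Finset.filter_subset _ _)
        rw [hpre, hfil, Finset.sum_union hdisj2]
        have e1 : ∑ j ∈ I, (e j + h (σ j)) = ∑ j ∈ I, e j :=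
          Finset.sum_congr rfl fun j hj => by rw [hhσI j hj, add_zero]
        have e2 : ∑ j ∈ C.filter (fun j => j < i), (e j + h (σ j))
            = ∑ j ∈ C.filter (fun j => j < i), e j
              + ∑ j ∈ C.filter (fun j => j < i), (S + α j) := by
          rw [← Finset.sum_add_distrib]
          exact Finset.sum_congr rfl fun j hj => by
            rw [hhσC j (Finset.mem_filter.mp hj).1]
        have hsplit : Finset.Icc 1 (i-1)
            = I.filter (fun j => j < i) ∪ C.filter (fun j => j < i) := by
          ext x
          simp only [Finset.mem_Icc, Finset.mem_union, Finset.mem_filter]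
          constructor
          · intro hx
            by_cases hxI : x ∈ I
            · exact Or.inl ⟨hxI, by omega⟩
            · have hxC : x ∈ C := Finset.mem_sdiff.mpr ⟨Finset.mem_Icc.mpr ⟨hx.1, by omega⟩, hxI⟩
              exact Or.inr ⟨hxC, by omega⟩
          · rintro (⟨hxI, hlt⟩ | ⟨hxC, hlt⟩)
            · have := hmemI x hxI; omega
            · have := (hmemC x hxC).1; omega
        have hdisj3 : Disjoint (I.filter (fun j => j < i)) (C.filter (fun j => j < i)) :=
          (hdisjIC.mono_left (Finset.filter_subset _ _)).mono_right (Finset.filter_subset _ _)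
        rw [hsplit, Finset.sum_union hdisj3, e1, e2, ← hsumIe]
        -- remaining: e i ≤ h(k+2) + ΣI<(S+α) − ΣC< e
        have hCsplit : ∑ j ∈ C.filter (fun j => j < i), e j
            + ∑ j ∈ C.filter (fun j => ¬ j < i), e j = ∑ j ∈ C, e j :=
          Finset.sum_filter_add_sum_filter_not C _ e
        have hsing : e i ≤ ∑ j ∈ C.filter (fun j => ¬ j < i), e j :=
          Finset.single_le_sum
            (fun j hj => he_nonneg j (hCsub (Finset.mem_filter.mp hj).1))
            (Finset.mem_filter.mpr ⟨hiC, by omega⟩)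
        have hpos : 0 ≤ ∑ j ∈ I.filter (fun j => j < i), (S + α j) :=
          Finset.sum_nonneg fun j hj => hSαnonnegI j (Finset.mem_filter.mp hj).1
        rw [hsumCe] at hCsplit
        linarith
end

section
/- Let α_1 ≥ α_2 ≥ … ≥ α_n be positive integers with n > 2, let S = Σ_{i=1}^n α_i with S > 2, let β be an integer with 0 < β < S, and let k < n be a positive integer. Consider the EAS instance with T = n + k + 4 time slots and n + 1 jobs, where for i ∈ {1,…,n}, job i has r_i = 2, d_i = k + 2 + i, and e_i = S²n² + α_i·(Sn), and job n+1 has r_{n+1} = 2, d_{n+1} = n + k + 4, and e_{n+1} = S³n³; and where h_1 = k·(S²n²) + β·(Sn); h_t = 0 for t ∈ {2,…,k+1}; h_{k+2} = (n−k)·(S²n²) + (S−β)·(Sn); h_t = S + α_{t−k−2} for t ∈ {k+3,…,n+k+2}; h_{n+k+3} = S³n³ − S·k − β; and h_{n+k+4} = 0. Then in every feasible schedule scheduling all n + 1 jobs, job n+1 is scheduled at slot n + k + 4; in particular, job n+1 is not scheduled at any slot in {1,…,n+k+2}. -/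
private lemma ksum_aux1 (S N K b : ℤ) (hS : 3 ≤ S) (hN : 3 ≤ N) (hK : 1 ≤ K)
    (hKN : K < N) (hb : 0 < b) (hbS : b < S) : 0 ≤ S ^ 3 * N ^ 3 - S * K - b := by
  nlinarith [mul_pos (show (0:ℤ) < S by linarith) (show (0:ℤ) < N by linarith),
    mul_le_mul_of_nonneg_left hKN.le (show (0:ℤ) ≤ S by linarith),
    mul_pos (mul_pos (show (0:ℤ) < S by linarith) (show (0:ℤ) < N by linarith))
      (mul_pos (show (0:ℤ) < S by linarith) (show (0:ℤ) < N by linarith)),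
    sq_nonneg (S * N - 3), sq_nonneg (S * N)]

private lemma ksum_aux2 (S N : ℤ) (hS : 3 ≤ S) (hN : 3 ≤ N) :
    S ^ 2 * N ^ 3 + S ^ 2 * N + N * S + S < S ^ 3 * N ^ 3 := by
  have hN0 : (0:ℤ) ≤ N := by linarith
  have hS0 : (0:ℤ) ≤ S := by linarith
  have hN2 : (9:ℤ) ≤ N ^ 2 := by nlinarith [sq_nonneg (N - 3)]
  have h1 : N ≤ N ^ 3 := by nlinarith [mul_nonneg hN0 (show (0:ℤ) ≤ N ^ 2 - 9 by linarith)]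
  have h2 : S ^ 2 * N ≤ S ^ 2 * N ^ 3 := by
    nlinarith [mul_nonneg (sq_nonneg S) (show (0:ℤ) ≤ N ^ 3 - N by linarith)]
  have h3 : N * S ≤ S ^ 2 * N := by
    nlinarith [mul_nonneg hN0 (mul_nonneg hS0 (show (0:ℤ) ≤ S - 1 by linarith))]
  have h4 : S ≤ S ^ 2 * N := by
    nlinarith [mul_nonneg hS0 (show (0:ℤ) ≤ S * N - 1 by nlinarith [mul_nonneg hS0 hN0])]
  have h5 : 3 * (S ^ 2 * N ^ 3) ≤ S ^ 3 * N ^ 3 := by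
    nlinarith [mul_nonneg (mul_nonneg (sq_nonneg S) (show (0:ℤ) ≤ S - 3 by linarith))
      (mul_nonneg hN0 (mul_nonneg hN0 hN0))]
  have h6 : 9 * (S ^ 2 * N) ≤ S ^ 2 * N ^ 3 := by
    nlinarith [mul_nonneg (mul_nonneg (sq_nonneg S) hN0) (show (0:ℤ) ≤ N ^ 2 - 9 by linarith)]
  linarith

/-- In the instance of the reduction from k-SUM to EAS with
identical release times and arbitrary due dates, every feasible schedule of all
`n + 1` jobs schedules job `n + 1` at slot `n + k + 4` (in particular not at any
slot in `{1,…,n+k+2}`). -/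
theorem ksum_reduction_last_job_slot (n k : ℕ) (α : ℕ → ℤ) (S β : ℤ)
    (hn : 2 < n)
    (hα_pos : ∀ i ∈ Finset.Icc 1 n, 0 < α i)
    (hα_sorted : ∀ i j, 1 ≤ i → i ≤ j → j ≤ n → α j ≤ α i)
    (hS : S = ∑ i ∈ Finset.Icc 1 n, α i) (hS2 : 2 < S)
    (hβ : 0 < β) (hβS : β < S)
    (hk : 0 < k) (hkn : k < n)
    (r : ℕ → ℕ) (hr : ∀ i, r i = 2)
    (d : ℕ → ℕ) (hd : ∀ i, 1 ≤ i → i ≤ n → d i = k + 2 + i)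
    (hd' : d (n + 1) = n + k + 4)
    (e : ℕ → ℤ) (he : ∀ i, 1 ≤ i → i ≤ n → e i = S ^ 2 * n ^ 2 + α i * (S * n))
    (he' : e (n + 1) = S ^ 3 * n ^ 3)
    (h : ℕ → ℤ)
    (hh1 : h 1 = k * (S ^ 2 * n ^ 2) + β * (S * n))
    (hh2 : ∀ t, 2 ≤ t → t ≤ k + 1 → h t = 0)
    (hh3 : h (k + 2) = (n - k) * (S ^ 2 * n ^ 2) + (S - β) * (S * n))
    (hh4 : ∀ t, k + 3 ≤ t → t ≤ n + k + 2 → h t = S + α (t - k - 2))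
    (hh5 : h (n + k + 3) = S ^ 3 * n ^ 3 - S * k - β)
    (hh6 : h (n + k + 4) = 0)
    (σ : ℕ → ℕ)
    (hfeas : IsFeasible (n + 1) (n + k + 4) r d e h (Finset.Icc 1 (n + 1)) σ) :
    σ (n + 1) = n + k + 4 := by
  obtain ⟨hJ, hinj, hall⟩ := hfeas
  have hmem : n + 1 ∈ Finset.Icc 1 (n + 1) := by simp
  obtain ⟨h1σ, h2σ, h3σ, h4σ, h5σ⟩ := hall (n + 1) hmem
  by_contra hne
  have ht : σ (n + 1) ≤ n + k + 3 := by omega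
  have hN : (3 : ℤ) ≤ (n : ℤ) := by exact_mod_cast hn
  have hS3 : (3 : ℤ) ≤ S := by omega
  have hknZ : (k : ℤ) < (n : ℤ) := by exact_mod_cast hkn
  have hkZ : (1 : ℤ) ≤ (k : ℤ) := by exact_mod_cast hk
  -- nonnegativity of h on [1, n+k+4]
  have hhnn : ∀ τ, 1 ≤ τ → τ ≤ n + k + 4 → 0 ≤ h τ := by
    intro τ hτ1 hτ2
    rcases eq_or_ne τ 1 with h1 | h1
    · subst h1; rw [hh1]
      have q1 : (0:ℤ) ≤ (k:ℤ) * (S ^ 2 * n ^ 2) := mul_nonneg (by linarith) (by positivity)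
      have q2 : (0:ℤ) ≤ β * (S * n) :=
        mul_nonneg (by linarith) (mul_nonneg (by linarith) (by positivity))
      linarith
    rcases le_or_gt τ (k + 1) with h2 | h2
    · rw [hh2 τ (by omega) h2]
    rcases eq_or_ne τ (k + 2) with h3 | h3
    · subst h3; rw [hh3]
      have q1 : (0:ℤ) ≤ ((n:ℤ) - k) * (S ^ 2 * n ^ 2) := mul_nonneg (by linarith) (by positivity)
      have q2 : (0:ℤ) ≤ (S - β) * (S * n) :=
        mul_nonneg (by linarith) (mul_nonneg (by linarith) (by positivity))
      linarith
    rcases le_or_gt τ (n + k + 2) with h4 | h4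
    · rw [hh4 τ (by omega) h4]
      have := hα_pos (τ - k - 2) (by simp [Finset.mem_Icc]; omega)
      linarith
    rcases eq_or_ne τ (n + k + 3) with h5 | h5
    · subst h5; rw [hh5]
      exact ksum_aux1 S n k β hS3 hN hkZ hknZ hβ hβS
    · have : τ = n + k + 4 := by omega
      subst this; rw [hh6]
  -- e is nonnegative on the job set
  have hennn : ∀ i ∈ Finset.Icc 1 (n + 1), 0 ≤ e i := by
    intro i hi
    rw [Finset.mem_Icc] at hi
    rcases eq_or_ne i (n + 1) with rfl | hi'
    · rw [he']; positivity
    · have hin : i ≤ n := by omega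
      rw [he i hi.1 hin]
      have hpos := hα_pos i (by simp [Finset.mem_Icc]; omega)
      have q1 : (0:ℤ) ≤ S ^ 2 * n ^ 2 := by positivity
      have q2 : (0:ℤ) ≤ α i * (S * n) :=
        mul_nonneg hpos.le (mul_nonneg (by linarith) (by positivity))
      linarith
  -- the subtracted sum is nonnegative
  have hB : 0 ≤ ∑ i ∈ (Finset.Icc 1 (n + 1)).filter (fun i => σ i < σ (n + 1)),
      (e i + h (σ i)) := by
    apply Finset.sum_nonneg
    intro i hi
    rw [Finset.mem_filter] at hi
    obtain ⟨hsi1, hsi2, _⟩ := hall i hi.1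
    have := hhnn (σ i) hsi1 hsi2
    have := hennn i hi.1
    linarith
  -- bound the harvested sum by the total over [1, n+k+2]
  have hA : (∑ τ ∈ Finset.Icc 1 (σ (n + 1) - 1), h τ) ≤
      ∑ τ ∈ Finset.Icc 1 (n + k + 2), h τ := by
    apply Finset.sum_le_sum_of_subset_of_nonneg
    · exact Finset.Icc_subset_Icc_right (by omega)
    · intro τ hτ _
      rw [Finset.mem_Icc] at hτ
      exact hhnn τ hτ.1 (by omega)
  -- compute the total harvested sum over [1, n+k+2]
  have key : ∑ τ ∈ Finset.Icc 1 (n + k + 2), h τ =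
      S ^ 2 * n ^ 3 + S ^ 2 * n + n * S + S := by
    have e1 : Finset.Icc 1 (n + k + 2) = Finset.Ioc 0 (n + k + 2) := by
      rw [← Finset.Icc_add_one_left_eq_Ioc]; rfl
    rw [e1]
    rw [← Finset.sum_Ioc_consecutive h (by omega : 0 ≤ k + 2) (by omega : k + 2 ≤ n + k + 2)]
    rw [← Finset.sum_Ioc_consecutive h (by omega : 0 ≤ k + 1) (by omega : k + 1 ≤ k + 2)]
    rw [← Finset.sum_Ioc_consecutive h (by omega : 0 ≤ 1) (by omega : 1 ≤ k + 1)]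
    have s1 : ∑ τ ∈ Finset.Ioc 0 1, h τ = h 1 := by simp
    have s2 : ∑ τ ∈ Finset.Ioc 1 (k + 1), h τ = 0 := by
      apply Finset.sum_eq_zero
      intro τ hτ
      rw [Finset.mem_Ioc] at hτ
      exact hh2 τ (by omega) hτ.2
    have s3 : ∑ τ ∈ Finset.Ioc (k + 1) (k + 2), h τ = h (k + 2) := by
      have : Finset.Ioc (k + 1) (k + 2) = {k + 2} := by
        ext x; simp only [Finset.mem_Ioc, Finset.mem_singleton]; omega
      rw [this, Finset.sum_singleton]
    have s4 : ∑ τ ∈ Finset.Ioc (k + 2) (n + k + 2), h τ = (n : ℤ) * S + S := by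
      have r1 : ∑ τ ∈ Finset.Ioc (k + 2) (n + k + 2), h τ =
          ∑ j ∈ Finset.Icc 1 n, h (j + k + 2) := by
        apply Finset.sum_nbij' (fun τ => τ - k - 2) (fun j => j + k + 2)
        · intro a ha; rw [Finset.mem_Ioc] at ha; rw [Finset.mem_Icc]; omega
        · intro a ha; rw [Finset.mem_Icc] at ha; rw [Finset.mem_Ioc]; omega
        · intro a ha; rw [Finset.mem_Ioc] at ha; omega
        · intro a ha; rw [Finset.mem_Icc] at ha; omega
        · intro a ha; rw [Finset.mem_Ioc] at ha
          have : a - k - 2 + k + 2 = a := by omega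
          rw [this]
      rw [r1]
      have r2 : ∀ j ∈ Finset.Icc 1 n, h (j + k + 2) = S + α j := by
        intro j hj
        rw [Finset.mem_Icc] at hj
        rw [hh4 (j + k + 2) (by omega) (by omega)]
        have : j + k + 2 - k - 2 = j := by omega
        rw [this]
      rw [Finset.sum_congr rfl r2, Finset.sum_add_distrib, Finset.sum_const,
        Nat.card_Icc, ← hS]
      simp
    rw [s1, s2, s3, s4, hh1, hh3]
    push_cast
    ring
  -- derive the contradiction
  have hEB : e (n + 1) ≤ energyBefore e h (Finset.Icc 1 (n + 1)) σ (σ (n + 1)) := h5σ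
  rw [he', energyBefore] at hEB
  have : S ^ 3 * n ^ 3 ≤ S ^ 2 * n ^ 3 + S ^ 2 * n + n * S + S := by
    calc S ^ 3 * (n : ℤ) ^ 3 ≤ (∑ τ ∈ Finset.Icc 1 (σ (n + 1) - 1), h τ) := by linarith
    _ ≤ ∑ τ ∈ Finset.Icc 1 (n + k + 2), h τ := hA
    _ = S ^ 2 * n ^ 3 + S ^ 2 * n + n * S + S := key
  have := ksum_aux2 S n hS3 hN
  linarith
end

section
/- Let there be n items, where item i has nonnegative integer size b_i and nonnegative integer value v_i, together with a capacity B ≥ 0 and a value threshold V ≥ 0. Consider the WEAS instance with T = n + 1 time slots and n jobs, where job i has r_i = 2, d_i = n + 1, e_i = b_i, and w_i = v_i, and where h_1 = B and h_t = 0 for t ∈ {2,…,n+1}. Then there exists a feasible schedule S with Σ_{i ∈ J(S)} w_i ≥ V if and only if there exists a subset I ⊆ {1,…,n} with Σ_{i ∈ I} b_i ≤ B and Σ_{i ∈ I} v_i ≥ V. -/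
lemma energy_eq (n : ℕ) (b : ℕ → ℕ) (B : ℕ) (h : ℕ → ℤ) (hh1 : h 1 = B)
    (hh2 : ∀ t, 2 ≤ t → t ≤ n + 1 → h t = 0) (J : Finset ℕ) (σ : ℕ → ℕ)
    (hσ : ∀ i ∈ J, 2 ≤ σ i ∧ σ i ≤ n + 1) (t : ℕ) (ht1 : 2 ≤ t) (ht2 : t ≤ n + 2) :
    energyBefore (fun i => (b i : ℤ)) h J σ t
      = (B : ℤ) - ∑ i ∈ J.filter (fun i => σ i < t), (b i : ℤ) := by
  unfold energyBefore
  have h1 : ∑ τ ∈ Finset.Icc 1 (t - 1), h τ = (B : ℤ) := by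
    rw [Finset.sum_eq_single_of_mem 1 (by simp; omega)]
    · exact hh1
    · intro τ hτ hτ1
      simp only [Finset.mem_Icc] at hτ
      exact hh2 τ (by omega) (by omega)
  have h2 : ∑ i ∈ J.filter (fun i => σ i < t), ((b i : ℤ) + h (σ i))
      = ∑ i ∈ J.filter (fun i => σ i < t), (b i : ℤ) := by
    refine Finset.sum_congr rfl fun i hi => ?_
    simp only [Finset.mem_filter] at hi
    rw [hh2 (σ i) (hσ i hi.1).1 (hσ i hi.1).2, add_zero]
  rw [h1, h2]

/-- Correctness of the reduction from Knapsack to WEAS with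
identical release times and due dates: in the instance with `T = n + 1` slots,
`r_i = 2`, `d_i = n + 1`, `e_i = b_i`, `w_i = v_i`, `h_1 = B` and `h_t = 0`
otherwise, there is a feasible schedule of total weight at least `V` iff there
is a subset of items of total size at most `B` and total value at least `V`. -/
theorem knapsack_reduction (n : ℕ) (b v : ℕ → ℕ) (B V : ℕ)
    (h : ℕ → ℤ) (hh1 : h 1 = B) (hh2 : ∀ t, 2 ≤ t → t ≤ n + 1 → h t = 0) :
    (∃ (J : Finset ℕ) (σ : ℕ → ℕ),
      IsFeasible n (n + 1) (fun _ => 2) (fun _ => n + 1)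
        (fun i => (b i : ℤ)) h J σ ∧ V ≤ ∑ i ∈ J, v i) ↔
    ∃ I : Finset ℕ, I ⊆ Finset.Icc 1 n ∧
      (∑ i ∈ I, b i ≤ B ∧ V ≤ ∑ i ∈ I, v i) := by
  constructor
  · rintro ⟨J, σ, ⟨hsub, hinj, hfeas⟩, hV⟩
    refine ⟨J, hsub, ?_, hV⟩
    have hσ : ∀ i ∈ J, 2 ≤ σ i ∧ σ i ≤ n + 1 := fun i hi =>
      ⟨(hfeas i hi).2.2.1, (hfeas i hi).2.1⟩
    rcases J.eq_empty_or_nonempty with rfl | hne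
    · simp
    · obtain ⟨i0, hi0, hmax⟩ := J.exists_max_image σ hne
      set F := J.filter (fun i => σ i < σ i0) with hF
      have hi0F : i0 ∉ F := by simp [hF]
      have hJ : J = insert i0 F := by
        ext i
        simp only [Finset.mem_insert, hF, Finset.mem_filter]
        constructor
        · intro hi
          rcases lt_or_eq_of_le (hmax i hi) with hlt | heq
          · exact Or.inr ⟨hi, hlt⟩
          · exact Or.inl (hinj hi hi0 heq)
        · rintro (rfl | ⟨hi, _⟩) <;> assumption
      have hE := (hfeas i0 hi0).2.2.2.2
      rw [energy_eq n b B h hh1 hh2 J σ hσ (σ i0) (hσ i0 hi0).1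
        (by have := (hσ i0 hi0).2; omega)] at hE
      have : (∑ i ∈ J, (b i : ℤ)) ≤ (B : ℤ) := by
        rw [hJ, Finset.sum_insert hi0F]
        linarith
      exact_mod_cast (by push_cast at this ⊢; exact this : ((∑ i ∈ J, b i : ℕ) : ℤ) ≤ (B : ℤ))
  · rintro ⟨I, hsub, hb, hv⟩
    refine ⟨I, fun i => i + 1, ⟨hsub, fun i _ j _ hij => by simpa using hij, fun i hi => ?_⟩, hv⟩
    have hmem := Finset.mem_Icc.mp (hsub hi)
    refine ⟨Nat.le_add_left 1 i, show i + 1 ≤ n + 1 by omega,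
      show 2 ≤ i + 1 by omega, show i + 1 ≤ n + 1 by omega, ?_⟩
    show (b i : ℤ) ≤ energyBefore (fun i => (b i : ℤ)) h I (fun i => i + 1) (i + 1)
    rw [energy_eq n b B h hh1 hh2 I (fun i => i + 1)
      (fun j hj => by
        have := Finset.mem_Icc.mp (hsub hj)
        exact ⟨show 2 ≤ j + 1 by omega, show j + 1 ≤ n + 1 by omega⟩) (i + 1)
      (by omega) (by omega)]
    have hsum : b i + ∑ j ∈ I.filter (fun j => j + 1 < i + 1), b j ≤ ∑ j ∈ I, b j := by
      have hiF : i ∉ I.filter (fun j => j + 1 < i + 1) := by simp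
      rw [← Finset.sum_insert hiF]
      refine Finset.sum_le_sum_of_subset ?_
      intro j hj
      simp only [Finset.mem_insert, Finset.mem_filter] at hj
      rcases hj with rfl | ⟨hj, _⟩ <;> assumption
    have : (b i : ℤ) + ∑ j ∈ I.filter (fun j => j + 1 < i + 1), (b j : ℤ) ≤ (B : ℤ) := by
      have := hsum.trans hb
      exact_mod_cast this
    linarith
end
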